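/- Let p ≥ 2 be an integer and let h : E → ℝ have L-Lipschitz p-th derivative. Let M ≥ L and x, y ∈ E. Define the quadratic form B(v) := D²h(x)[v, v] + Σ_{i=3}^{p} (1/(i−1)!) · D^i h(x)[(y−x)^{i−2}, v, v] + (M/p!)·‖y − x‖^{p−1}·‖v‖². Then for every v ∈ E: ∫₀¹ D²h(x + τ(y−x))[v, v] dτ ≤ B(v) ≤ ∫₀¹ D²h(x + τ(y−x))[v, v] dτ + ((M + L)/p!)·‖y − x‖^{p−1}·‖v‖². -/

import Mathlib

open scoped RealInnerProductSpace BigOperators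

open Set Finset MeasureTheory intervalIntegral in
theorem prod_ite_norm {α : Type*} [NormedAddCommGroup α] (n k : ℕ) (hk : k ≤ n) (a b : α) :
    ∏ j : Fin n, ‖(if (j : ℕ) < k then a else b)‖ = ‖a‖ ^ k * ‖b‖ ^ (n - k) := by
  rw [Fin.prod_univ_eq_prod_range (fun i => ‖(if i < k then a else b)‖) n]
  have h1 : (Finset.range n).filter (fun i => i < k) = Finset.range k := by
    ext i; simp [Finset.mem_filter, Finset.mem_range]; omega
  have h2 : ∀ i ∈ Finset.range n, ‖if i < k then a else b‖ = if i < k then ‖a‖ else ‖b‖ := by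
    intro i _; split <;> rfl
  have h3 : ((Finset.range n).filter (fun i => ¬ i < k)).card = n - k := by
    have := Finset.card_filter_add_card_filter_not (s := Finset.range n)
      (p := fun i => i < k)
    rw [h1] at this; simp at this ⊢; omega
  rw [Finset.prod_congr rfl h2, Finset.prod_ite, h1, Finset.prod_const, Finset.prod_const, h3,
    Finset.card_range]

open Set MeasureTheory intervalIntegral in
theorem taylor_lip_aux : ∀ (m : ℕ) (g : ℕ → ℝ → ℝ) (C : ℝ), 0 ≤ C →
    (∀ k, k ≤ m → Continuous (g k)) →
    (∀ k, k < m → ∀ τ : ℝ, HasDerivAt (g k) (g (k + 1) τ) τ) →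
    (∀ τ ∈ Icc (0 : ℝ) 1, |g m τ - g m 0| ≤ C * τ) →
    ∀ τ ∈ Icc (0 : ℝ) 1,
      |g 0 τ - ∑ k ∈ Finset.range (m + 1), τ ^ k / (Nat.factorial k : ℝ) * g k 0|
        ≤ C * τ ^ (m + 1) / (Nat.factorial (m + 1) : ℝ) := by
  intro m
  induction m with
  | zero =>
    intro g C hC0 hc hd hlip τ hτ
    simpa [Nat.factorial] using hlip τ hτ
  | succ m IH =>
    intro g C hC0 hc hd hlip τ hτ
    have IH1 := IH (fun k => g (k + 1)) C hC0 (fun k hk => hc (k + 1) (by omega))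
      (fun k hk t => hd (k + 1) (by omega) t) hlip
    set P : ℝ → ℝ := fun t => ∑ k ∈ Finset.range (m + 2), t ^ k / (Nat.factorial k : ℝ) * g k 0
      with hP
    set Q : ℝ → ℝ := fun t => ∑ k ∈ Finset.range (m + 1), t ^ k / (Nat.factorial k : ℝ) * g (k + 1) 0
      with hQ
    have hde : ∀ t : ℝ, HasDerivAt (fun s => g 0 s - P s) (g 1 t - Q t) t := by
      intro t
      have hDP : HasDerivAt P (Q t) t := by
        have h1 : HasDerivAt P
            (∑ k ∈ Finset.range (m + 2), (k : ℝ) * t ^ (k - 1) / (Nat.factorial k : ℝ) * g k 0) t := by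
          apply HasDerivAt.fun_sum
          intro k hk
          simpa [div_mul_eq_mul_div] using
            ((hasDerivAt_pow k t).div_const (Nat.factorial k : ℝ)).mul_const (g k 0)
        convert h1 using 1
        rw [Finset.sum_range_succ' (fun k => (k : ℝ) * t ^ (k - 1) / (Nat.factorial k : ℝ) * g k 0) (m + 1)]
        simp only [Nat.cast_zero, zero_mul, zero_div, zero_mul, add_zero]
        apply Finset.sum_congr rfl
        intro k hk
        have : (Nat.factorial (k + 1) : ℝ) = (k + 1) * Nat.factorial k := by
          push_cast [Nat.factorial_succ]; ring
        simp only [this, Nat.add_sub_cancel]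
        have hfk : (Nat.factorial k : ℝ) ≠ 0 := Nat.cast_ne_zero.mpr (Nat.factorial_ne_zero k)
        field_simp
        push_cast; ring
      exact (hd 0 (by omega) t).sub hDP
    have he0 : g 0 0 - P 0 = 0 := by
      have : P 0 = g 0 0 := by
        simp only [hP]
        rw [Finset.sum_eq_single 0]
        · simp
        · intro k _ hk
          rcases Nat.exists_eq_succ_of_ne_zero hk with ⟨j, rfl⟩
          simp [zero_pow]
        · simp
      rw [this, sub_self]
    have hQcont : Continuous Q := by
      apply continuous_finset_sum
      intro k _
      fun_prop
    have hcont : Continuous (fun t => g 1 t - Q t) := (hc 1 (by omega)).sub hQcont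
    have hτ0 : (0 : ℝ) ≤ τ := hτ.1
    have hFTC : g 0 τ - P τ = ∫ t in (0 : ℝ)..τ, (g 1 t - Q t) := by
      have h := intervalIntegral.integral_eq_sub_of_hasDerivAt
        (f := fun s => g 0 s - P s) (f' := fun t => g 1 t - Q t)
        (fun t _ => hde t) (hcont.intervalIntegrable 0 τ)
      rw [h, he0, sub_zero]
    have key : |g 0 τ - P τ| ≤ C * τ ^ (m + 2) / (Nat.factorial (m + 2) : ℝ) := by
      rw [hFTC]
      have hb : ∀ t ∈ Set.uIoc (0 : ℝ) τ, ‖g 1 t - Q t‖ ≤ C * t ^ (m + 1) / (Nat.factorial (m + 1) : ℝ) := by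
        intro t ht
        rw [uIoc_of_le hτ0] at ht
        exact IH1 t ⟨le_of_lt ht.1, le_trans ht.2 hτ.2⟩
      have hbint : IntervalIntegrable (fun t => C * t ^ (m + 1) / (Nat.factorial (m + 1) : ℝ))
          volume 0 τ := by
        apply Continuous.intervalIntegrable
        fun_prop
      have hval : (∫ t in (0 : ℝ)..τ, C * t ^ (m + 1) / (Nat.factorial (m + 1) : ℝ))
          = C * τ ^ (m + 2) / (Nat.factorial (m + 2) : ℝ) := by
        have heq : ∀ t : ℝ, C * t ^ (m + 1) / (Nat.factorial (m + 1) : ℝ)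
            = t ^ (m + 1) * (C / (Nat.factorial (m + 1) : ℝ)) := by intro t; ring
        simp_rw [heq]
        rw [intervalIntegral.integral_mul_const, integral_pow]
        have h2 : (Nat.factorial (m + 2) : ℝ) = (m + 2) * Nat.factorial (m + 1) := by
          push_cast [Nat.factorial_succ]; ring
        rw [h2]
        have hf1 : (Nat.factorial (m + 1) : ℝ) ≠ 0 := Nat.cast_ne_zero.mpr (Nat.factorial_ne_zero _)
        field_simp
        push_cast; ring
      calc |∫ t in (0 : ℝ)..τ, (g 1 t - Q t)|
          ≤ |∫ t in (0 : ℝ)..τ, C * t ^ (m + 1) / (Nat.factorial (m + 1) : ℝ)| := by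
            apply intervalIntegral.norm_integral_le_abs_of_norm_le
              ((ae_restrict_iff' measurableSet_uIoc).mpr (Filter.Eventually.of_forall hb)) hbint
        _ = C * τ ^ (m + 2) / (Nat.factorial (m + 2) : ℝ) := by
            rw [hval]
            exact abs_of_nonneg (by positivity)
    show |g 0 τ - P τ| ≤ C * τ ^ (m + 2) / (Nat.factorial (m + 2) : ℝ)
    exact key

open Set MeasureTheory intervalIntegral in
theorem taylor_lip_integral (m : ℕ) (g : ℕ → ℝ → ℝ) (C : ℝ) (hC0 : 0 ≤ C)
    (hc : ∀ k, k ≤ m → Continuous (g k))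
    (hd : ∀ k, k < m → ∀ τ : ℝ, HasDerivAt (g k) (g (k + 1) τ) τ)
    (hlip : ∀ τ ∈ Icc (0 : ℝ) 1, |g m τ - g m 0| ≤ C * τ) :
    |(∫ τ in (0 : ℝ)..1, g 0 τ) -
        ∑ k ∈ Finset.range (m + 1), 1 / (Nat.factorial (k + 1) : ℝ) * g k 0|
      ≤ C / (Nat.factorial (m + 2) : ℝ) := by
  have hpt := taylor_lip_aux m g C hC0 hc hd hlip
  set P : ℝ → ℝ := fun t => ∑ k ∈ Finset.range (m + 1), t ^ k / (Nat.factorial k : ℝ) * g k 0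
    with hP
  have hPcont : Continuous P := by
    apply continuous_finset_sum; intro k _; fun_prop
  have hPint : (∫ τ in (0 : ℝ)..1, P τ)
      = ∑ k ∈ Finset.range (m + 1), 1 / (Nat.factorial (k + 1) : ℝ) * g k 0 := by
    rw [hP, intervalIntegral.integral_finset_sum]
    · apply Finset.sum_congr rfl
      intro k _
      have heq : ∀ t : ℝ, t ^ k / (Nat.factorial k : ℝ) * g k 0
          = t ^ k * (g k 0 / (Nat.factorial k : ℝ)) := by intro t; ring
      simp_rw [heq]
      rw [intervalIntegral.integral_mul_const, integral_pow]
      have h2 : (Nat.factorial (k + 1) : ℝ) = (k + 1) * Nat.factorial k := by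
        push_cast [Nat.factorial_succ]; ring
      rw [h2]
      have hf1 : (Nat.factorial k : ℝ) ≠ 0 := Nat.cast_ne_zero.mpr (Nat.factorial_ne_zero _)
      field_simp
      simp
    · intro k _
      apply Continuous.intervalIntegrable; fun_prop
  have hgint : IntervalIntegrable (g 0) volume 0 1 := ((hc 0 (by omega)).intervalIntegrable 0 1)
  have hsub : (∫ τ in (0 : ℝ)..1, g 0 τ) -
      (∑ k ∈ Finset.range (m + 1), 1 / (Nat.factorial (k + 1) : ℝ) * g k 0)
      = ∫ τ in (0 : ℝ)..1, (g 0 τ - P τ) := by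
    rw [intervalIntegral.integral_sub hgint (hPcont.intervalIntegrable 0 1), hPint]
  rw [hsub]
  have hbint : IntervalIntegrable (fun t : ℝ => C * t ^ (m + 1) / (Nat.factorial (m + 1) : ℝ))
      volume 0 1 := by apply Continuous.intervalIntegrable; fun_prop
  have hb : ∀ t ∈ Set.uIoc (0 : ℝ) 1, ‖g 0 t - P t‖ ≤ C * t ^ (m + 1) / (Nat.factorial (m + 1) : ℝ) := by
    intro t ht
    rw [uIoc_of_le (by norm_num : (0:ℝ) ≤ 1)] at ht
    exact hpt t ⟨le_of_lt ht.1, ht.2⟩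
  have hval : (∫ t in (0 : ℝ)..1, C * t ^ (m + 1) / (Nat.factorial (m + 1) : ℝ))
      = C / (Nat.factorial (m + 2) : ℝ) := by
    have heq : ∀ t : ℝ, C * t ^ (m + 1) / (Nat.factorial (m + 1) : ℝ)
        = t ^ (m + 1) * (C / (Nat.factorial (m + 1) : ℝ)) := by intro t; ring
    simp_rw [heq]
    rw [intervalIntegral.integral_mul_const, integral_pow]
    have h2 : (Nat.factorial (m + 2) : ℝ) = (m + 2) * Nat.factorial (m + 1) := by
      push_cast [Nat.factorial_succ]; ring
    rw [h2]
    have hf1 : (Nat.factorial (m + 1) : ℝ) ≠ 0 := Nat.cast_ne_zero.mpr (Nat.factorial_ne_zero _)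
    field_simp
    simp; push_cast; ring
  calc |∫ t in (0 : ℝ)..1, (g 0 t - P t)|
      ≤ |∫ t in (0 : ℝ)..1, C * t ^ (m + 1) / (Nat.factorial (m + 1) : ℝ)| :=
        intervalIntegral.norm_integral_le_abs_of_norm_le
          ((ae_restrict_iff' measurableSet_uIoc).mpr (Filter.Eventually.of_forall hb)) hbint
    _ = C / (Nat.factorial (m + 2) : ℝ) := by rw [hval]; exact abs_of_nonneg (by positivity)

variable {E : Type*} [NormedAddCommGroup E] [InnerProductSpace ℝ E] [FiniteDimensional ℝ E]

/-- `ψ : E → ℝ` is `p` times continuously differentiable and its `p`-th Fréchet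
derivative is `L`-Lipschitz. -/
def HasLipschitzDerivOfOrder (p : ℕ) (L : ℝ) (ψ : E → ℝ) : Prop :=
  ContDiff ℝ p ψ ∧
    ∀ x y : E, ‖iteratedFDeriv ℝ p ψ x - iteratedFDeriv ℝ p ψ y‖ ≤ L * ‖x - y‖

/-- The quadratic form
`B(v) = D²h(x)[v,v] + Σ_{i=3}^p D^i h(x)[(y-x)^{i-2},v,v]/(i-1)! + (M/p!)‖y-x‖^{p-1}‖v‖²`. -/
noncomputable def ghomQuadForm (p : ℕ) (M : ℝ) (h : E → ℝ) (x y v : E) : ℝ :=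
  iteratedFDeriv ℝ 2 h x ![v, v] +
    (∑ i ∈ Finset.Icc 3 p, (1 : ℝ) / (Nat.factorial (i - 1) : ℝ) *
      iteratedFDeriv ℝ i h x (fun j : Fin i => if (j : ℕ) < i - 2 then y - x else v)) +
    M / (Nat.factorial p : ℝ) * ‖y - x‖ ^ (p - 1) * ‖v‖ ^ 2

open Set MeasureTheory intervalIntegral in
theorem hasDerivAt_iteratedFDeriv_line {p n : ℕ} {h : E → ℝ} (hh : ContDiff ℝ (p : ℕ∞) h)
    (hn : n < p) (x u : E) (w : Fin n → E) (τ : ℝ) :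
    HasDerivAt (fun t : ℝ => iteratedFDeriv ℝ n h (x + t • u) w)
      (iteratedFDeriv ℝ (n + 1) h (x + τ • u) (Fin.cons u w)) τ := by
  have hdiff : DifferentiableAt ℝ (iteratedFDeriv ℝ n h) (x + τ • u) :=
    (hh.differentiable_iteratedFDeriv (by exact_mod_cast hn)).differentiableAt
  have hline : HasDerivAt (fun t : ℝ => x + t • u) u τ := by
    simpa using ((hasDerivAt_id τ).smul_const u).const_add x
  have h1 : HasDerivAt (fun t : ℝ => iteratedFDeriv ℝ n h (x + t • u))
      (fderiv ℝ (iteratedFDeriv ℝ n h) (x + τ • u) u) τ :=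
    hdiff.hasFDerivAt.comp_hasDerivAt τ hline
  have h2 := (ContinuousMultilinearMap.apply ℝ (fun _ : Fin n => E) ℝ w).hasFDerivAt.comp_hasDerivAt τ h1
  exact h2

set_option maxHeartbeats 1000000 in
open Set MeasureTheory intervalIntegral in
/-- Two-sided bounds on the quadratic form `B` in terms of the averaged Hessian
of `h` along the segment from `x` to `y`. -/
theorem ghom_quadform_bounds
    (p : ℕ) (hp : 2 ≤ p) (L : ℝ) (hL : 0 < L)
    (h : E → ℝ) (hh : HasLipschitzDerivOfOrder p L h)
    (M : ℝ) (hM : L ≤ M) (x y : E) :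
    ∀ v : E,
      (∫ τ in (0:ℝ)..1, iteratedFDeriv ℝ 2 h (x + τ • (y - x)) ![v, v]) ≤
        ghomQuadForm p M h x y v ∧
      ghomQuadForm p M h x y v ≤
        (∫ τ in (0:ℝ)..1, iteratedFDeriv ℝ 2 h (x + τ • (y - x)) ![v, v]) +
          (M + L) / (Nat.factorial p : ℝ) * ‖y - x‖ ^ (p - 1) * ‖v‖ ^ 2 := by
  obtain ⟨hCD, hLip⟩ := hh
  obtain ⟨m, rfl⟩ : ∃ m, p = m + 2 := ⟨p - 2, by omega⟩
  intro v
  set u : E := y - x with hu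
  set g : ℕ → ℝ → ℝ := fun k τ =>
    iteratedFDeriv ℝ (k + 2) h (x + τ • u)
      (fun j : Fin (k + 2) => if (j : ℕ) < k then u else v) with hg
  set C : ℝ := L * (‖u‖ ^ (m + 1) * ‖v‖ ^ 2) with hC
  have hC0 : 0 ≤ C := by positivity
  -- continuity
  have hgc : ∀ k, k ≤ m → Continuous (g k) := by
    intro k hk
    have h1 : Continuous (iteratedFDeriv ℝ (k + 2) h) :=
      hCD.continuous_iteratedFDeriv (by exact_mod_cast Nat.cast_le.mpr (by omega : k + 2 ≤ m + 2))
    have h2 : Continuous (fun τ : ℝ => x + τ • u) := by continuity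
    exact (ContinuousMultilinearMap.apply ℝ (fun _ : Fin (k + 2) => E) ℝ
      (fun j : Fin (k + 2) => if (j : ℕ) < k then u else v)).continuous.comp (h1.comp h2)
  -- derivatives
  have hgd : ∀ k, k < m → ∀ τ : ℝ, HasDerivAt (g k) (g (k + 1) τ) τ := by
    intro k hk τ
    have := hasDerivAt_iteratedFDeriv_line (p := m + 2) hCD (by omega : k + 2 < m + 2) x u
      (fun j : Fin (k + 2) => if (j : ℕ) < k then u else v) τ
    have harg : (Fin.cons u (fun j : Fin (k + 2) => if (j : ℕ) < k then u else v)
        : Fin (k + 3) → E) = fun j : Fin (k + 3) => if (j : ℕ) < k + 1 then u else v := by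
      funext j
      refine Fin.cases ?_ (fun i => ?_) j
      · simp
      · simp [Fin.cons_succ, Nat.succ_lt_succ_iff]
    rw [harg] at this
    exact this
  -- Lipschitz bound at top level
  have hglip : ∀ τ ∈ Icc (0 : ℝ) 1, |g m τ - g m 0| ≤ C * τ := by
    intro τ hτ
    have hsub : g m τ - g m 0
        = (iteratedFDeriv ℝ (m + 2) h (x + τ • u) - iteratedFDeriv ℝ (m + 2) h (x + (0 : ℝ) • u))
            (fun j : Fin (m + 2) => if (j : ℕ) < m then u else v) := by
      simp [hg]
    rw [hsub]
    have h1 : |(iteratedFDeriv ℝ (m + 2) h (x + τ • u) - iteratedFDeriv ℝ (m + 2) h (x + (0:ℝ) • u))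
          (fun j : Fin (m + 2) => if (j : ℕ) < m then u else v)|
        ≤ ‖iteratedFDeriv ℝ (m + 2) h (x + τ • u) - iteratedFDeriv ℝ (m + 2) h (x + (0:ℝ) • u)‖
          * ∏ j : Fin (m + 2), ‖(if (j : ℕ) < m then u else v)‖ := by
      rw [← Real.norm_eq_abs]
      exact ContinuousMultilinearMap.le_opNorm _ _
    have h2 : ‖iteratedFDeriv ℝ (m + 2) h (x + τ • u) - iteratedFDeriv ℝ (m + 2) h (x + (0:ℝ) • u)‖
        ≤ L * (τ * ‖u‖) := by
      have := hLip (x + τ • u) (x + (0 : ℝ) • u)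
      have heq : (x + τ • u) - (x + (0 : ℝ) • u) = τ • u := by
        simp
      rw [heq] at this
      rw [norm_smul, Real.norm_eq_abs, abs_of_nonneg hτ.1] at this
      linarith [this]
    have h3 : ∏ j : Fin (m + 2), ‖(if (j : ℕ) < m then u else v)‖ = ‖u‖ ^ m * ‖v‖ ^ 2 := by
      have := prod_ite_norm (m + 2) m (by omega) u v
      simpa using this
    calc |(iteratedFDeriv ℝ (m + 2) h (x + τ • u) - iteratedFDeriv ℝ (m + 2) h (x + (0:ℝ) • u))
          (fun j : Fin (m + 2) => if (j : ℕ) < m then u else v)|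
        ≤ (L * (τ * ‖u‖)) * (‖u‖ ^ m * ‖v‖ ^ 2) := by
          rw [h3] at h1
          refine h1.trans ?_
          apply mul_le_mul_of_nonneg_right h2 (by positivity)
      _ = C * τ := by rw [hC]; ring
  -- main Taylor estimate
  have key := taylor_lip_integral m g C hC0 hgc hgd hglip
  -- identify the integral
  have hvv : (fun j : Fin (0 + 2) => if (j : ℕ) < 0 then u else v) = ![v, v] := by
    funext j; fin_cases j <;> rfl
  have hint_eq : (∫ τ in (0 : ℝ)..1, iteratedFDeriv ℝ 2 h (x + τ • u) ![v, v])
      = ∫ τ in (0 : ℝ)..1, g 0 τ := by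
    apply intervalIntegral.integral_congr
    intro τ _
    rw [hg]
    simp only []
    rw [hvv]
  -- identify the quadratic form
  have hS_eq : ghomQuadForm (m + 2) M h x y v
      = (∑ k ∈ Finset.range (m + 1), 1 / (Nat.factorial (k + 1) : ℝ) * g k 0)
        + M / (Nat.factorial (m + 2) : ℝ) * ‖u‖ ^ (m + 1) * ‖v‖ ^ 2 := by
    rw [ghomQuadForm]
    have e1 : iteratedFDeriv ℝ 2 h x ![v, v] = g 0 0 := by
      rw [hg]; simp only []
      rw [hvv]
      norm_num
    have e2 : (∑ i ∈ Finset.Icc 3 (m + 2), (1 : ℝ) / (Nat.factorial (i - 1) : ℝ) *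
          iteratedFDeriv ℝ i h x (fun j : Fin i => if (j : ℕ) < i - 2 then y - x else v))
        = ∑ k ∈ Finset.Icc 1 m, 1 / (Nat.factorial (k + 1) : ℝ) * g k 0 := by
      have hmap : Finset.Icc 3 (m + 2) = (Finset.Icc 1 m).map (addRightEmbedding 2) := by
        rw [Finset.map_add_right_Icc]
      rw [hmap, Finset.sum_map]
      apply Finset.sum_congr rfl
      intro k hk
      have : (addRightEmbedding 2) k = k + 2 := rfl
      rw [this]
      have hfac : k + 2 - 1 = k + 1 := by omega
      have hidx : k + 2 - 2 = k := by omega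
      rw [hfac, hidx, hg]
      simp only []
      norm_num
      exact Or.inl rfl
    have e3 : (∑ k ∈ Finset.range (m + 1), 1 / (Nat.factorial (k + 1) : ℝ) * g k 0)
        = g 0 0 + ∑ k ∈ Finset.Icc 1 m, 1 / (Nat.factorial (k + 1) : ℝ) * g k 0 := by
      rw [Finset.range_eq_Ico, ← Finset.sum_Ico_consecutive _ (by omega : 0 ≤ 1) (by omega : 1 ≤ m + 1)]
      congr 1
      simp [Nat.factorial]
    rw [e1, e2, e3]
    have hm1 : m + 2 - 1 = m + 1 := by omega
    rw [hm1]
  -- final arithmetic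
  set I : ℝ := ∫ τ in (0 : ℝ)..1, g 0 τ with hI
  set S : ℝ := ∑ k ∈ Finset.range (m + 1), 1 / (Nat.factorial (k + 1) : ℝ) * g k 0 with hS
  set T : ℝ := ‖u‖ ^ (m + 1) * ‖v‖ ^ 2 with hT
  have hT0 : 0 ≤ T := by positivity
  have hF : (0 : ℝ) < (Nat.factorial (m + 2) : ℝ) := by
    exact_mod_cast Nat.factorial_pos (m + 2)
  have habs := abs_sub_le_iff.mp key
  have hCT : C = L * T := by rw [hC, hT]
  have hCle : C / (Nat.factorial (m + 2) : ℝ) ≤ M * T / (Nat.factorial (m + 2) : ℝ) := by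
    rw [hCT]
    gcongr
  have hm1 : m + 2 - 1 = m + 1 := by omega
  constructor
  · rw [hint_eq, hS_eq]
    have h2 : M / (Nat.factorial (m + 2) : ℝ) * ‖u‖ ^ (m + 1) * ‖v‖ ^ 2
        = M * T / (Nat.factorial (m + 2) : ℝ) := by rw [hT]; ring
    rw [h2]
    linarith [habs.1, hCle]
  · rw [hint_eq, hS_eq, hm1]
    have h3 : S - I ≤ C / (Nat.factorial (m + 2) : ℝ) := habs.2
    have h4 : (M + L) / (Nat.factorial (m + 2) : ℝ) * ‖u‖ ^ (m + 1) * ‖v‖ ^ 2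
        = M * T / (Nat.factorial (m + 2) : ℝ) + L * T / (Nat.factorial (m + 2) : ℝ) := by
      rw [hT]; ring
    have h5 : M / (Nat.factorial (m + 2) : ℝ) * ‖u‖ ^ (m + 1) * ‖v‖ ^ 2
        = M * T / (Nat.factorial (m + 2) : ℝ) := by rw [hT]; ring
    rw [h4, h5, hCT] at *
    linarith [habs.2]
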